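/- Under the MAR assumption, for any real cut point c, E[ 1_{T ≥ c} · ( V·D + (1 − V)·ρ ) ] = ℙ(T ≥ c, D = 1); i.e. the mean-score single-observation term for β = ℙ(T ≥ c, D = 1) is unbiased. -/

import Mathlib

open MeasureTheory ProbabilityTheory

/-- Under MAR, for any real cut point `c`,
`E[1_{T ≥ c} · (V·D + (1 − V)·ρ)] = ℙ(T ≥ c, D = 1)`: the mean-score single-observation
term for `β = ℙ(T ≥ c, D = 1)` is unbiased. -/
theorem mar_mean_score_unbiased_beta
    {Ω : Type*} [mΩ : MeasurableSpace Ω] [StandardBorelSpace Ω] [Nonempty Ω]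
    (μ : Measure Ω) [IsProbabilityMeasure μ] {d : ℕ}
    (T : Ω → ℝ) (A : Ω → (Fin d → ℝ)) (D V : Ω → ℝ)
    (hT : Measurable T) (hA : Measurable A) (hD : Measurable D) (hV : Measurable V)
    (hDval : ∀ ω, D ω = 0 ∨ D ω = 1) (hVval : ∀ ω, V ω = 0 ∨ V ω = 1)
    (𝒢 : MeasurableSpace Ω)
    (h𝒢 : 𝒢 = MeasurableSpace.comap (fun ω => (T ω, A ω)) inferInstance)
    (h𝒢le : 𝒢 ≤ mΩ)
    (MAR : CondIndepFun (mΩ := mΩ) 𝒢 h𝒢le V D μ) (c : ℝ) :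
    ∫ ω, (if c ≤ T ω then (1 : ℝ) else 0) * (V ω * D ω + (1 - V ω) * (μ[D | 𝒢]) ω) ∂μ
      = (μ {ω | c ≤ T ω ∧ D ω = 1}).toReal := by
  classical
  set g : Ω → ℝ := fun ω => if c ≤ T ω then (1 : ℝ) else 0 with hgdef
  set ρ : Ω → ℝ := μ[D | 𝒢] with hρdef
  set π : Ω → ℝ := μ[V | 𝒢] with hπdef
  -- T is 𝒢-measurable
  have hT𝒢 : Measurable[𝒢] T := by
    rw [h𝒢]
    exact measurable_fst.comp (Measurable.of_comap_le le_rfl)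
  have hs𝒢 : MeasurableSet[𝒢] {ω | c ≤ T ω} := hT𝒢 measurableSet_Ici
  have hgind : g = Set.indicator {ω | c ≤ T ω} (fun _ => (1 : ℝ)) := by
    funext ω; by_cases h : c ≤ T ω <;> simp [hgdef, Set.indicator_apply, h]
  have hg𝒢 : StronglyMeasurable[𝒢] g := by
    rw [hgind]; exact stronglyMeasurable_const.indicator hs𝒢
  have hgm : AEStronglyMeasurable[mΩ] g μ := (hg𝒢.mono h𝒢le).aestronglyMeasurable
  have hgbd : ∀ ω, ‖g ω‖ ≤ 1 := by
    intro ω; by_cases h : c ≤ T ω <;> simp [hgdef, h]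
  -- basic integrabilities
  have hDbd : ∀ ω, ‖D ω‖ ≤ 1 := by
    intro ω; rcases hDval ω with h | h <;> simp [h]
  have hVbd : ∀ ω, ‖V ω‖ ≤ 1 := by
    intro ω; rcases hVval ω with h | h <;> simp [h]
  have hDint : Integrable D μ :=
    (integrable_const (1 : ℝ)).mono' hD.aestronglyMeasurable (ae_of_all _ hDbd)
  have hVint : Integrable V μ :=
    (integrable_const (1 : ℝ)).mono' hV.aestronglyMeasurable (ae_of_all _ hVbd)
  have hVDint : Integrable (fun ω => V ω * D ω) μ := by
    refine (integrable_const (1 : ℝ)).mono' ((hV.mul hD).aestronglyMeasurable) (ae_of_all _ ?_)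
    intro ω
    calc ‖V ω * D ω‖ = ‖V ω‖ * ‖D ω‖ := norm_mul _ _
      _ ≤ 1 * 1 := mul_le_mul (hVbd ω) (hDbd ω) (norm_nonneg _) zero_le_one
      _ = 1 := one_mul 1
  -- ρ and π are 𝒢-measurable, integrable, a.e. bounded by 1
  have hρ𝒢 : StronglyMeasurable[𝒢] ρ := stronglyMeasurable_condExp
  have hπ𝒢 : StronglyMeasurable[𝒢] π := stronglyMeasurable_condExp
  have hρint : Integrable ρ μ := integrable_condExp
  have hπint : Integrable π μ := integrable_condExp
  have bd_of : ∀ f : Ω → ℝ, (∀ ω, ‖f ω‖ ≤ 1) → Integrable f μ →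
      (∀ᵐ ω ∂μ, ‖(μ[f|𝒢]) ω‖ ≤ 1) := by
    intro f hfb hfint
    have h1 : μ[f|𝒢] ≤ᵐ[μ] μ[(fun _ => (1:ℝ))|𝒢] :=
      condExp_mono hfint (integrable_const 1) (ae_of_all _ fun ω =>
        le_trans (le_abs_self _) (hfb ω))
    have h2 : μ[(fun _ => (-1:ℝ))|𝒢] ≤ᵐ[μ] μ[f|𝒢] :=
      condExp_mono (integrable_const (-1)) hfint (ae_of_all _ fun ω =>
        neg_le_of_abs_le (hfb ω))
    rw [condExp_const h𝒢le] at h1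
    rw [condExp_const h𝒢le] at h2
    filter_upwards [h1, h2] with ω h1 h2
    rw [Real.norm_eq_abs, abs_le]
    exact ⟨h2, h1⟩
  have hρbd : ∀ᵐ ω ∂μ, ‖ρ ω‖ ≤ 1 := bd_of D hDbd hDint
  have hπbd : ∀ᵐ ω ∂μ, ‖π ω‖ ≤ 1 := bd_of V hVbd hVint
  have hρm : AEStronglyMeasurable[mΩ] ρ μ := (hρ𝒢.mono h𝒢le).aestronglyMeasurable
  have hπm : AEStronglyMeasurable[mΩ] π μ := (hπ𝒢.mono h𝒢le).aestronglyMeasurable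
  -- Step A: MAR implies μ[V·D|𝒢] = π·ρ a.e.
  have hVind : V = Set.indicator (V ⁻¹' {1}) (fun _ => (1 : ℝ)) := by
    funext ω; rcases hVval ω with h | h <;> simp [Set.indicator_apply, h]
  have hDind : D = Set.indicator (D ⁻¹' {1}) (fun _ => (1 : ℝ)) := by
    funext ω; rcases hDval ω with h | h <;> simp [Set.indicator_apply, h]
  have hVDind : (fun ω => V ω * D ω)
      = Set.indicator (V ⁻¹' {1} ∩ D ⁻¹' {1}) (fun _ => (1 : ℝ)) := by
    funext ω
    rcases hVval ω with h | h <;> rcases hDval ω with h' | h' <;>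
      simp [Set.indicator_apply, Set.mem_inter_iff, h, h']
  have stepA : μ[(fun ω => V ω * D ω)|𝒢] =ᵐ[μ] fun ω => π ω * ρ ω := by
    have mar := (condIndepFun_iff_condExp_inter_preimage_eq_mul hV hD).mp MAR
      {1} {1} (measurableSet_singleton 1) (measurableSet_singleton 1)
    have hπeq : π = μ[Set.indicator (V ⁻¹' {1}) (fun _ => (1 : ℝ))|𝒢] := by
      rw [hπdef, ← hVind]
    have hρeq : ρ = μ[Set.indicator (D ⁻¹' {1}) (fun _ => (1 : ℝ))|𝒢] := by
      rw [hρdef, ← hDind]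
    rw [hVDind, hπeq, hρeq]
    exact mar
  -- pull-out lemma instances
  haveI : SigmaFinite (μ.trim h𝒢le) := by
    exact (isFiniteMeasure_trim h𝒢le (μ := μ)).toSigmaFinite
  -- first term
  have hf1int : Integrable (fun ω => g ω * (V ω * D ω)) μ := by
    refine (integrable_const (1 : ℝ)).mono' (hgm.mul hVDint.aestronglyMeasurable)
      (ae_of_all _ fun ω => ?_)
    calc ‖g ω * (V ω * D ω)‖ = ‖g ω‖ * ‖V ω * D ω‖ := norm_mul _ _
      _ ≤ 1 * 1 := by
          refine mul_le_mul (hgbd ω) ?_ (norm_nonneg _) zero_le_one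
          calc ‖V ω * D ω‖ = ‖V ω‖ * ‖D ω‖ := norm_mul _ _
            _ ≤ 1 * 1 := mul_le_mul (hVbd ω) (hDbd ω) (norm_nonneg _) zero_le_one
            _ = 1 := one_mul 1
      _ = 1 := one_mul 1
  have step1 : ∫ ω, g ω * (V ω * D ω) ∂μ = ∫ ω, g ω * (π ω * ρ ω) ∂μ := by
    have hpull : μ[g * (fun ω => V ω * D ω)|𝒢] =ᵐ[μ] g * μ[(fun ω => V ω * D ω)|𝒢] :=
      condExp_stronglyMeasurable_mul_of_bound h𝒢le hg𝒢 hVDint 1 (ae_of_all _ hgbd)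
    calc ∫ ω, g ω * (V ω * D ω) ∂μ
        = ∫ ω, (μ[g * (fun ω => V ω * D ω)|𝒢]) ω ∂μ := (integral_condExp h𝒢le).symm
      _ = ∫ ω, g ω * (μ[(fun ω => V ω * D ω)|𝒢]) ω ∂μ := integral_congr_ae hpull
      _ = ∫ ω, g ω * (π ω * ρ ω) ∂μ := by
          refine integral_congr_ae ?_
          filter_upwards [stepA] with ω h
          rw [h]
  -- second term
  have hw : Integrable (fun ω => 1 - V ω) μ := (integrable_const (1 : ℝ)).sub hVint
  have hq𝒢 : StronglyMeasurable[𝒢] (fun ω => g ω * ρ ω) := hg𝒢.mul hρ𝒢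
  have hqbd : ∀ᵐ ω ∂μ, ‖g ω * ρ ω‖ ≤ 1 := by
    filter_upwards [hρbd] with ω h
    calc ‖g ω * ρ ω‖ = ‖g ω‖ * ‖ρ ω‖ := norm_mul _ _
      _ ≤ 1 * 1 := mul_le_mul (hgbd ω) h (norm_nonneg _) zero_le_one
      _ = 1 := one_mul 1
  have hf2int : Integrable (fun ω => g ω * ((1 - V ω) * ρ ω)) μ := by
    refine (integrable_const (1 : ℝ)).mono'
      (hgm.mul ((((aestronglyMeasurable_const (b := (1:ℝ))).sub
        hV.aestronglyMeasurable)).mul hρm)) ?_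
    filter_upwards [hρbd] with ω h
    have h1V : ‖1 - V ω‖ ≤ 1 := by
      rcases hVval ω with h' | h' <;> simp [h']
    calc ‖g ω * ((1 - V ω) * ρ ω)‖ = ‖g ω‖ * ‖(1 - V ω) * ρ ω‖ := norm_mul _ _
      _ ≤ 1 * 1 := by
          refine mul_le_mul (hgbd ω) ?_ (norm_nonneg _) zero_le_one
          calc ‖(1 - V ω) * ρ ω‖ = ‖1 - V ω‖ * ‖ρ ω‖ := norm_mul _ _
            _ ≤ 1 * 1 := mul_le_mul h1V h (norm_nonneg _) zero_le_one
            _ = 1 := one_mul 1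
      _ = 1 := one_mul 1
  have hcw : μ[(fun ω => 1 - V ω)|𝒢] =ᵐ[μ] fun ω => 1 - π ω := by
    have : μ[(fun _ => (1:ℝ)) - V|𝒢] =ᵐ[μ] μ[(fun _ => (1:ℝ))|𝒢] - μ[V|𝒢] :=
      condExp_sub (integrable_const 1) hVint 𝒢
    rw [condExp_const h𝒢le] at this
    have hrw : (fun ω => 1 - V ω) = (fun _ => (1:ℝ)) - V := rfl
    rw [hrw]
    filter_upwards [this] with ω h
    exact h
  have step2 : ∫ ω, g ω * ((1 - V ω) * ρ ω) ∂μ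
      = ∫ ω, (g ω * ρ ω) * (1 - π ω) ∂μ := by
    have hre : (fun ω => g ω * ((1 - V ω) * ρ ω))
        = (fun ω => g ω * ρ ω) * (fun ω => 1 - V ω) := by
      funext ω; simp [Pi.mul_apply]; ring
    have hpull : μ[(fun ω => g ω * ρ ω) * (fun ω => 1 - V ω)|𝒢]
        =ᵐ[μ] (fun ω => g ω * ρ ω) * μ[(fun ω => 1 - V ω)|𝒢] :=
      condExp_stronglyMeasurable_mul_of_bound h𝒢le hq𝒢 hw 1 hqbd
    calc ∫ ω, g ω * ((1 - V ω) * ρ ω) ∂μ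
        = ∫ ω, ((fun ω => g ω * ρ ω) * (fun ω => 1 - V ω)) ω ∂μ := by rw [hre]
      _ = ∫ ω, (μ[(fun ω => g ω * ρ ω) * (fun ω => 1 - V ω)|𝒢]) ω ∂μ :=
          (integral_condExp h𝒢le).symm
      _ = ∫ ω, (g ω * ρ ω) * (μ[(fun ω => 1 - V ω)|𝒢]) ω ∂μ := integral_congr_ae hpull
      _ = ∫ ω, (g ω * ρ ω) * (1 - π ω) ∂μ := by
          refine integral_congr_ae ?_
          filter_upwards [hcw] with ω h
          rw [h]
  -- combine
  have hgπρint : Integrable (fun ω => g ω * (π ω * ρ ω)) μ := by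
    refine (integrable_const (1 : ℝ)).mono' (hgm.mul (hπm.mul hρm)) ?_
    filter_upwards [hρbd, hπbd] with ω h h'
    calc ‖g ω * (π ω * ρ ω)‖ = ‖g ω‖ * ‖π ω * ρ ω‖ := norm_mul _ _
      _ ≤ 1 * 1 := by
          refine mul_le_mul (hgbd ω) ?_ (norm_nonneg _) zero_le_one
          calc ‖π ω * ρ ω‖ = ‖π ω‖ * ‖ρ ω‖ := norm_mul _ _
            _ ≤ 1 * 1 := mul_le_mul h' h (norm_nonneg _) zero_le_one
            _ = 1 := one_mul 1
      _ = 1 := one_mul 1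
  have hgρπint : Integrable (fun ω => (g ω * ρ ω) * (1 - π ω)) μ := by
    refine (integrable_const (2 : ℝ)).mono' ((hgm.mul hρm).mul
      ((aestronglyMeasurable_const (b := (1:ℝ))).sub hπm)) ?_
    filter_upwards [hqbd, hπbd] with ω h h'
    have h1π : ‖1 - π ω‖ ≤ 2 := by
      calc ‖1 - π ω‖ ≤ ‖(1:ℝ)‖ + ‖π ω‖ := norm_sub_le _ _
        _ ≤ 1 + 1 := by simpa using h'
        _ = 2 := by norm_num
    calc ‖(g ω * ρ ω) * (1 - π ω)‖ = ‖g ω * ρ ω‖ * ‖1 - π ω‖ := norm_mul _ _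
      _ ≤ 1 * 2 := mul_le_mul h h1π (norm_nonneg _) zero_le_one
      _ = 2 := one_mul 2
  have step3 : ∫ ω, g ω * (π ω * ρ ω) ∂μ + ∫ ω, (g ω * ρ ω) * (1 - π ω) ∂μ
      = ∫ ω, g ω * ρ ω ∂μ := by
    rw [← integral_add hgπρint hgρπint]
    refine integral_congr_ae (ae_of_all _ fun ω => ?_)
    ring
  -- last step: ∫ g·ρ = ∫ g·D = μ(set)
  have step4 : ∫ ω, g ω * ρ ω ∂μ = ∫ ω, g ω * D ω ∂μ := by
    have hpull : μ[g * D|𝒢] =ᵐ[μ] g * μ[D|𝒢] :=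
      condExp_stronglyMeasurable_mul_of_bound h𝒢le hg𝒢 hDint 1 (ae_of_all _ hgbd)
    calc ∫ ω, g ω * ρ ω ∂μ = ∫ ω, (g * μ[D|𝒢]) ω ∂μ := rfl
      _ = ∫ ω, (μ[g * D|𝒢]) ω ∂μ := (integral_congr_ae hpull).symm
      _ = ∫ ω, g ω * D ω ∂μ := integral_condExp h𝒢le
  have step5 : ∫ ω, g ω * D ω ∂μ = (μ {ω | c ≤ T ω ∧ D ω = 1}).toReal := by
    have hset : MeasurableSet[mΩ] {ω | c ≤ T ω ∧ D ω = 1} := by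
      have : {ω | c ≤ T ω ∧ D ω = 1} = T ⁻¹' Set.Ici c ∩ D ⁻¹' {1} := rfl
      rw [this]
      exact (hT measurableSet_Ici).inter (hD (measurableSet_singleton 1))
    have heq : (fun ω => g ω * D ω)
        = Set.indicator {ω | c ≤ T ω ∧ D ω = 1} (fun _ => (1 : ℝ)) := by
      funext ω
      rcases hDval ω with h | h <;> by_cases h' : c ≤ T ω <;>
        simp [hgdef, Set.indicator_apply, Set.mem_setOf_eq, h, h']
    rw [heq]
    simpa [measureReal_def, Pi.one_def] using @integral_indicator_one Ω mΩ μ _ hset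
  -- assemble
  have expand : ∫ ω, g ω * (V ω * D ω + (1 - V ω) * ρ ω) ∂μ
      = ∫ ω, g ω * (V ω * D ω) ∂μ + ∫ ω, g ω * ((1 - V ω) * ρ ω) ∂μ := by
    rw [← integral_add hf1int hf2int]
    refine integral_congr_ae (ae_of_all _ fun ω => ?_)
    ring
  calc ∫ ω, g ω * (V ω * D ω + (1 - V ω) * ρ ω) ∂μ
      = ∫ ω, g ω * (V ω * D ω) ∂μ + ∫ ω, g ω * ((1 - V ω) * ρ ω) ∂μ := expand
    _ = ∫ ω, g ω * (π ω * ρ ω) ∂μ + ∫ ω, (g ω * ρ ω) * (1 - π ω) ∂μ := by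
        rw [step1, step2]
    _ = ∫ ω, g ω * ρ ω ∂μ := step3
    _ = ∫ ω, g ω * D ω ∂μ := step4
    _ = (μ {ω | c ≤ T ω ∧ D ω = 1}).toReal := step5
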